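/- Let f₁, …, f_N ∈ ℝ^d and suppose there exist I, J ⊆ {1,…,N} with I ∪ J = {1,…,N} such that V_I^⊥ + V_J^⊥ = ℝ^d, where V_K = span{f_j : j ∈ K}. Then for every u ∈ ℝ^d there exists v ∈ ℝ^d such that |⟨f_i, u⟩| = |⟨f_i, v⟩| for all i, obtained as follows: writing u = x + y with x ∈ V_I^⊥ and y ∈ V_J^⊥, the vector v = x − y satisfies ⟨f_i, u⟩ = ±⟨f_i, v⟩ for all i (with sign − for i ∈ J and + for i ∈ I... specifically ⟨f_i,u⟩ = ⟨f_i,v⟩ for i ∈ I and ⟨f_i,u⟩ = −⟨f_i,v⟩ for i ∈ J). -/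

import Mathlib

theorem stmt_14 (d N : ℕ) (f : Fin N → EuclideanSpace ℝ (Fin d))
    (I J : Set (Fin N)) (hIJ : I ∪ J = Set.univ)
    (hsum : (Submodule.span ℝ (f '' I))ᗮ ⊔ (Submodule.span ℝ (f '' J))ᗮ = ⊤) :
    ∀ u : EuclideanSpace ℝ (Fin d), ∃ v : EuclideanSpace ℝ (Fin d),
      (∀ i ∈ I, inner ℝ (f i) u = (inner ℝ (f i) v : ℝ)) ∧
      (∀ i ∈ J, inner ℝ (f i) u = -(inner ℝ (f i) v : ℝ)) ∧
      (∀ i, |(inner ℝ (f i) u : ℝ)| = |(inner ℝ (f i) v : ℝ)|) := by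
  intro u
  have hu : u ∈ (Submodule.span ℝ (f '' I))ᗮ ⊔ (Submodule.span ℝ (f '' J))ᗮ := by
    rw [hsum]; trivial
  obtain ⟨x, hx, y, hy, hxy⟩ := Submodule.mem_sup.mp hu
  have hxI : ∀ i ∈ I, (inner ℝ (f i) x : ℝ) = 0 := fun i hi =>
    (Submodule.mem_orthogonal _ x).mp hx (f i) (Submodule.subset_span ⟨i, hi, rfl⟩)
  have hyJ : ∀ i ∈ J, (inner ℝ (f i) y : ℝ) = 0 := fun i hi =>
    (Submodule.mem_orthogonal _ y).mp hy (f i) (Submodule.subset_span ⟨i, hi, rfl⟩)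
  refine ⟨y - x, ?_, ?_, ?_⟩
  · intro i hi
    rw [← hxy]
    simp [inner_add_right, inner_sub_right, hxI i hi]
  · intro i hi
    rw [← hxy]
    simp [inner_add_right, inner_sub_right, hyJ i hi]
  · intro i
    have : i ∈ I ∪ J := hIJ ▸ Set.mem_univ i
    rcases this with hi | hi
    · rw [← hxy]; simp [inner_add_right, inner_sub_right, hxI i hi]
    · rw [← hxy]; simp [inner_add_right, inner_sub_right, hyJ i hi, abs_neg]
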